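/- Let γ : S¹ → GL(n,ℂ) extend analytically to a neighborhood of the unit circle, and define the operator P on boundary functions by (Pψ)(z) = pr₊( ψ(z) + (1/2πi) ∮ [γ(z)γ^{−1}(ζ) − I]/(ζ − z) · ψ(ζ) dζ ), where pr₊ is the projection onto the Hardy space of functions analytic inside the circle and the contour integral is taken with |ζ| < |z|. Then in the Fourier basis, P coincides with the operator T(γ)T(γ^{−1}), i.e., its (i,j)-block matrix entry is δᵢⱼ I − Σ_{k≥1} γ^{(i+k)}(γ^{−1})^{(−j−k)}. -/

import Mathlib

open Complex Metric MeasureTheory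

lemma circleIntegral_tsum {ι : Type*} [Countable ι] {ρ : ℝ} (hρ : 0 < ρ)
    (f : ι → ℂ → ℂ) (F : ℂ → ℂ) (bound : ι → ℝ)
    (hcont : ∀ i, ContinuousOn (f i) (sphere (0:ℂ) ρ))
    (hb : Summable bound)
    (hbound : ∀ i, ∀ ζ ∈ sphere (0:ℂ) ρ, ‖f i ζ‖ ≤ bound i)
    (hF : ∀ ζ ∈ sphere (0:ℂ) ρ, HasSum (fun i => f i ζ) (F ζ)) :
    (∮ ζ in C(0, ρ), F ζ) = ∑' i, ∮ ζ in C(0, ρ), f i ζ := by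
  have h2π : (0:ℝ) ≤ 2 * Real.pi := by positivity
  set G : ι → ℝ → ℂ := fun i θ => deriv (circleMap 0 ρ) θ • f i (circleMap 0 ρ θ) with hG
  have hmem : ∀ θ : ℝ, circleMap 0 ρ θ ∈ sphere (0:ℂ) ρ := fun θ =>
    circleMap_mem_sphere _ hρ.le θ
  have hGcont : ∀ i, Continuous (G i) := by
    intro i
    have h1 : Continuous fun θ => deriv (circleMap 0 ρ) θ := by
      simp only [deriv_circleMap]
      exact (continuous_circleMap 0 ρ).mul continuous_const
    exact h1.smul ((hcont i).comp_continuous (continuous_circleMap 0 ρ) hmem)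
  have hGint : ∀ i, Integrable (G i) (volume.restrict (Set.Ioc 0 (2*Real.pi))) :=
    fun i => (hGcont i).integrableOn_Ioc
  have hGbd : ∀ i θ, ‖G i θ‖ ≤ ρ * bound i := by
    intro i θ
    rw [hG]
    simp only [norm_smul, deriv_circleMap]
    have h1 : ‖circleMap 0 ρ θ * I‖ = ρ := by
      simp [abs_of_pos hρ]
    rw [h1]
    exact mul_le_mul_of_nonneg_left (hbound i _ (hmem θ)) hρ.le
  have hsumint : Summable fun i => ∫ θ in Set.Ioc 0 (2*Real.pi), ‖G i θ‖ := by
    refine Summable.of_nonneg_of_le (fun i => integral_nonneg fun θ => norm_nonneg _)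
      (fun i => ?_) ((hb.mul_left ρ).mul_left (2*Real.pi))
    calc ∫ θ in Set.Ioc 0 (2*Real.pi), ‖G i θ‖
        ≤ ∫ _θ in Set.Ioc 0 (2*Real.pi), (ρ * bound i) := by
          refine integral_mono_of_nonneg (Filter.Eventually.of_forall fun θ => norm_nonneg _)
            (integrableOn_const measure_Ioc_lt_top.ne) ?_
          exact Filter.Eventually.of_forall fun θ => hGbd i θ
      _ ≤ 2*Real.pi * (ρ * bound i) := by
          rw [setIntegral_const]
          simp [Real.volume_Ioc]
          rw [max_eq_left h2π]
  calc (∮ ζ in C(0, ρ), F ζ)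
      = ∫ θ in Set.Ioc 0 (2*Real.pi), ∑' i, G i θ := by
        rw [circleIntegral, intervalIntegral.integral_of_le h2π]
        refine setIntegral_congr_fun measurableSet_Ioc fun θ _ => ?_
        exact (((hF _ (hmem θ)).const_smul _).tsum_eq).symm
    _ = ∑' i, ∫ θ in Set.Ioc 0 (2*Real.pi), G i θ :=
        (integral_tsum_of_summable_integral_norm hGint hsumint).symm
    _ = ∑' i, ∮ ζ in C(0, ρ), f i ζ := by
        refine tsum_congr fun i => ?_
        rw [circleIntegral, intervalIntegral.integral_of_le h2π]

lemma circleIntegral_zpow {ρ : ℝ} (hρ : 0 < ρ) (k : ℤ) :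
    (∮ ζ in C(0, ρ), ζ ^ k) = if k = -1 then 2 * Real.pi * I else 0 := by
  split_ifs with hk
  · subst hk
    have := circleIntegral.integral_sub_inv_of_mem_ball (c := 0) (w := 0) (R := ρ)
      (by simpa using hρ)
    simpa using this
  · have := circleIntegral.integral_sub_zpow_of_ne hk 0 0 ρ
    simpa using this

lemma circleIntegral_add_of_continuousOn {R : ℝ} (hR : 0 < R) {f g : ℂ → ℂ}
    (hf : ContinuousOn f (sphere (0:ℂ) R)) (hg : ContinuousOn g (sphere (0:ℂ) R)) :
    (∮ z in C(0, R), (f z + g z)) = (∮ z in C(0, R), f z) + ∮ z in C(0, R), g z := by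
  simp only [circleIntegral, smul_add]
  have hd : Continuous fun θ : ℝ => deriv (circleMap 0 R) θ := by
    simp only [deriv_circleMap]
    exact (continuous_circleMap 0 R).mul continuous_const
  refine intervalIntegral.integral_add ?_ ?_
  · exact (hd.smul (hf.comp_continuous (continuous_circleMap 0 R)
      fun θ => circleMap_mem_sphere _ hR.le θ)).intervalIntegrable _ _
  · exact (hd.smul (hg.comp_continuous (continuous_circleMap 0 R)
      fun θ => circleMap_mem_sphere _ hR.le θ)).intervalIntegrable _ _

lemma norm_eq_of_sphere {ρ : ℝ} {ζ : ℂ} (hζ : ζ ∈ sphere (0:ℂ) ρ) : ‖ζ‖ = ρ := by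
  simpa using hζ

lemma circleIntegral_coeff {ρ : ℝ} (hρ : 0 < ρ) (f : ℤ → ℂ) (F : ℂ → ℂ) (p : ℤ)
    (hF : ∀ ζ ∈ sphere (0:ℂ) ρ, HasSum (fun k : ℤ => f k * ζ ^ k) (F ζ))
    (hs : Summable (fun k : ℤ => ‖f k‖ * ρ ^ k)) :
    (∮ ζ in C(0, ρ), ζ ^ p * F ζ) = 2 * Real.pi * I * f (-p - 1) := by
  have hne : ∀ ζ ∈ sphere (0:ℂ) ρ, ζ ≠ 0 := by
    intro ζ hζ h0
    rw [h0] at hζ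
    simp at hζ
    exact hρ.ne' hζ.symm
  have key : (∮ ζ in C(0, ρ), ζ ^ p * F ζ) = ∑' k : ℤ, ∮ ζ in C(0, ρ), f k * ζ ^ (p + k) := by
    refine circleIntegral_tsum hρ (fun k ζ => f k * ζ ^ (p + k)) (fun ζ => ζ ^ p * F ζ)
      (fun k => ρ ^ p * (‖f k‖ * ρ ^ k)) ?_ (hs.mul_left _) ?_ ?_
    · intro k
      refine continuousOn_const.mul (ContinuousOn.zpow₀ (continuousOn_id) _ ?_)
      exact fun ζ hζ => Or.inl (hne ζ hζ)
    · intro k ζ hζ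
      have hζn : ‖ζ‖ = ρ := norm_eq_of_sphere hζ
      rw [norm_mul, norm_zpow, hζn, zpow_add₀ hρ.ne']
      ring_nf
      exact le_refl _
    · intro ζ hζ
      have h1 : HasSum (fun k : ℤ => ζ ^ p * (f k * ζ ^ k)) (ζ ^ p * F ζ) :=
        (hF ζ hζ).mul_left _
      refine h1.congr_fun fun k => ?_
      show f k * ζ ^ (p + k) = ζ ^ p * (f k * ζ ^ k)
      rw [zpow_add₀ (hne ζ hζ)]
      ring
  rw [key]
  have heach : ∀ k : ℤ, (∮ ζ in C(0, ρ), f k * ζ ^ (p + k))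
      = f k * (if p + k = -1 then 2 * Real.pi * I else 0) := by
    intro k
    have := circleIntegral.integral_smul (f k) (fun ζ => ζ ^ (p + k)) 0 ρ
    simp only [smul_eq_mul] at this
    rw [this, circleIntegral_zpow hρ]
  calc (∑' k : ℤ, ∮ ζ in C(0, ρ), f k * ζ ^ (p + k))
      = ∑' k : ℤ, (f k * (if p + k = -1 then 2 * Real.pi * I else 0)) := tsum_congr heach
    _ = 2 * Real.pi * I * f (-p - 1) := by
        rw [tsum_eq_single (-p - 1) ?_]
        · rw [if_pos (by ring : p + (-p - 1) = -1)]; ring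
        · intro k hk
          rw [if_neg (by omega), mul_zero]

lemma summable_norm_mul_zpow {c : ℤ → ℂ} {t : ℝ} (ht : 0 < t) {v : ℂ}
    (h : HasSum (fun k : ℤ => c k * (t:ℂ) ^ k) v) :
    Summable (fun k : ℤ => ‖c k‖ * t ^ k) := by
  have h1 : Summable fun k : ℤ => ‖c k * (t:ℂ) ^ k‖ := summable_norm_iff.mpr h.summable
  refine h1.congr fun k => ?_
  rw [norm_mul, norm_zpow, Complex.norm_real, Real.norm_of_nonneg ht.le]

lemma continuousOn_laurent {c : ℤ → ℂ} {ρ : ℝ} (hρ : 0 < ρ)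
    (hs : Summable fun k : ℤ => ‖c k‖ * ρ ^ k) {G : ℂ → ℂ}
    (hG : ∀ ζ ∈ sphere (0:ℂ) ρ, HasSum (fun k : ℤ => c k * ζ ^ k) (G ζ)) :
    ContinuousOn G (sphere (0:ℂ) ρ) := by
  have hne : ∀ ζ ∈ sphere (0:ℂ) ρ, ζ ≠ 0 := by
    intro ζ hζ h0
    rw [h0] at hζ
    simp at hζ
    exact hρ.ne' hζ.symm
  have h1 : ContinuousOn (fun ζ : ℂ => ∑' k : ℤ, c k * ζ ^ k) (sphere (0:ℂ) ρ) := by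
    refine continuousOn_tsum (fun k => continuousOn_const.mul
      (ContinuousOn.zpow₀ continuousOn_id _ fun ζ hζ => Or.inl (hne ζ hζ))) hs ?_
    intro k ζ hζ
    rw [norm_mul, norm_zpow, norm_eq_of_sphere hζ]
  exact h1.congr fun ζ hζ => ((hG ζ hζ).tsum_eq).symm

theorem plemelj_operator_eq_toeplitz_product (n : ℕ) (r R ρ : ℝ)
    (hr0 : 0 < r) (hrρ : r < ρ) (hρ : ρ < 1) (hR : 1 < R)
    (g h : ℤ → Matrix (Fin n) (Fin n) ℂ)
    (Γ Γi : ℂ → Matrix (Fin n) (Fin n) ℂ)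
    (hΓ : ∀ z : ℂ, r ≤ ‖z‖ → ‖z‖ ≤ R → ∀ a b,
      HasSum (fun k : ℤ => g k a b * z ^ k) (Γ z a b))
    (hΓi : ∀ z : ℂ, r ≤ ‖z‖ → ‖z‖ ≤ R → ∀ a b,
      HasSum (fun k : ℤ => h k a b * z ^ k) (Γi z a b))
    (hinv : ∀ z : ℂ, r ≤ ‖z‖ → ‖z‖ ≤ R → Γ z * Γi z = 1) :
    ∀ (i j : ℕ) (a b : Fin n),
      (2 * Real.pi * Complex.I)⁻¹ *
        (∮ z in C(0, 1),
          z ^ (-(i : ℤ) - 1) *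
            ((if a = b then z ^ (j : ℕ) else 0) +
              (2 * Real.pi * Complex.I)⁻¹ *
                ∮ ζ in C(0, ρ),
                  (ζ - z)⁻¹ *
                    ((∑ c, Γ z a c * Γi ζ c b) - (if a = b then 1 else 0)) *
                      ζ ^ (j : ℕ)))
        = (if i = j ∧ a = b then 1 else 0)
            - ∑' k : ℕ, ∑ c, g ((i : ℤ) + k + 1) a c * h (-(j : ℤ) - k - 1) c b := by
  intro i j a b
  have hρ0 : (0:ℝ) < ρ := hr0.trans hrρ
  have hr1 : r < 1 := hrρ.trans hρ
  have h2πI : (2 * (Real.pi:ℂ) * I) ≠ 0 := by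
    simp [Real.pi_ne_zero, I_ne_zero]
  -- summability of coefficient norms at any radius in [r, R]
  have hgs : ∀ t : ℝ, r ≤ t → t ≤ R → ∀ a' b',
      Summable (fun k : ℤ => ‖g k a' b'‖ * t ^ k) := by
    intro t h1 h2 a' b'
    have ht : 0 < t := hr0.trans_le h1
    have hn : ‖(t:ℂ)‖ = t := by rw [Complex.norm_real, Real.norm_of_nonneg ht.le]
    exact summable_norm_mul_zpow ht (hΓ (t:ℂ) (by rw [hn]; exact h1) (by rw [hn]; exact h2) a' b')
  have hhs : ∀ t : ℝ, r ≤ t → t ≤ R → ∀ a' b',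
      Summable (fun k : ℤ => ‖h k a' b'‖ * t ^ k) := by
    intro t h1 h2 a' b'
    have ht : 0 < t := hr0.trans_le h1
    have hn : ‖(t:ℂ)‖ = t := by rw [Complex.norm_real, Real.norm_of_nonneg ht.le]
    exact summable_norm_mul_zpow ht (hΓi (t:ℂ) (by rw [hn]; exact h1) (by rw [hn]; exact h2) a' b')
  -- basic sphere facts
  have hmem1 : ∀ z ∈ sphere (0:ℂ) 1, r ≤ ‖z‖ ∧ ‖z‖ ≤ R := by
    intro z hz
    rw [norm_eq_of_sphere hz]
    exact ⟨hr1.le, hR.le⟩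
  have hmemρ : ∀ ζ ∈ sphere (0:ℂ) ρ, r ≤ ‖ζ‖ ∧ ‖ζ‖ ≤ R := by
    intro ζ hζ
    rw [norm_eq_of_sphere hζ]
    exact ⟨hrρ.le, (hρ.trans hR).le⟩
  have hne1 : ∀ z ∈ sphere (0:ℂ) 1, z ≠ 0 := by
    intro z hz h0
    rw [h0] at hz
    simp at hz
  -- bounding constants
  set Cg : Fin n → ℝ := fun c => ∑' k : ℤ, ‖g k a c‖ with hCgdef
  set Ch : Fin n → ℝ := fun c => ∑' k : ℤ, ‖h k c b‖ * ρ ^ k with hChdef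
  set Kh : Fin n → ℝ := fun c => ∑' k : ℤ, ‖h k c b‖ * r ^ k with hKhdef
  have hgs1 : ∀ a' b', Summable (fun k : ℤ => ‖g k a' b'‖) := by
    intro a' b'
    have := hgs 1 hr1.le hR.le a' b'
    refine this.congr fun k => ?_
    rw [one_zpow, mul_one]
  have hCg0 : ∀ c, 0 ≤ Cg c := fun c => tsum_nonneg fun k => norm_nonneg _
  have hCh0 : ∀ c, 0 ≤ Ch c := fun c => tsum_nonneg fun k =>
    mul_nonneg (norm_nonneg _) (zpow_nonneg hρ0.le _)
  have hKh0 : ∀ c, 0 ≤ Kh c := fun c => tsum_nonneg fun k =>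
    mul_nonneg (norm_nonneg _) (zpow_nonneg hr0.le _)
  have hCg : ∀ z ∈ sphere (0:ℂ) 1, ∀ c, ‖Γ z a c‖ ≤ Cg c := by
    intro z hz c
    have h1 := hΓ z (hmem1 z hz).1 (hmem1 z hz).2 a c
    rw [← h1.tsum_eq]
    refine (norm_tsum_le_tsum_norm ?_).trans (le_of_eq (tsum_congr fun k => ?_))
    · refine (hgs1 a c).congr fun k => ?_
      rw [norm_mul, norm_zpow, norm_eq_of_sphere hz, one_zpow, mul_one]
    · rw [norm_mul, norm_zpow, norm_eq_of_sphere hz, one_zpow, mul_one]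
  have hCh : ∀ ζ ∈ sphere (0:ℂ) ρ, ∀ c, ‖Γi ζ c b‖ ≤ Ch c := by
    intro ζ hζ c
    have h1 := hΓi ζ (hmemρ ζ hζ).1 (hmemρ ζ hζ).2 c b
    rw [← h1.tsum_eq]
    refine (norm_tsum_le_tsum_norm ?_).trans (le_of_eq (tsum_congr fun k => ?_))
    · refine (hhs ρ hrρ.le (hρ.trans hR).le c b).congr fun k => ?_
      rw [norm_mul, norm_zpow, norm_eq_of_sphere hζ]
    · rw [norm_mul, norm_zpow, norm_eq_of_sphere hζ]
  have hKh : ∀ c, ∀ k : ℤ, ‖h k c b‖ * r ^ k ≤ Kh c := by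
    intro c k
    exact Summable.le_tsum (hhs r le_rfl (by linarith) c b) k fun k' _ =>
      mul_nonneg (norm_nonneg _) (zpow_nonneg hr0.le _)
  -- bound on negative h coefficients
  have hhneg : ∀ c, ∀ m : ℕ, ‖h (-(j:ℤ) - m - 1) c b‖ ≤ Kh c * r ^ (m + j + 1 : ℕ) := by
    intro c m
    have h1 := hKh c (-(j:ℤ) - m - 1)
    have h2 : r ^ (-(j:ℤ) - m - 1) = (r ^ (m + j + 1 : ℕ))⁻¹ := by
      rw [← zpow_natCast r (m + j + 1), ← zpow_neg]
      congr 1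
      push_cast
      ring
    rw [h2] at h1
    have hp : (0:ℝ) < r ^ (m + j + 1 : ℕ) := pow_pos hr0 _
    calc ‖h (-(j:ℤ) - m - 1) c b‖
        = (‖h (-(j:ℤ) - m - 1) c b‖ * (r ^ (m + j + 1 : ℕ))⁻¹) * r ^ (m + j + 1 : ℕ) := by
          field_simp
      _ ≤ Kh c * r ^ (m + j + 1 : ℕ) := mul_le_mul_of_nonneg_right h1 hp.le
  -- continuity of Γ, Γi entries on the relevant spheres
  have hΓcont : ∀ c, ContinuousOn (fun z => Γ z a c) (sphere (0:ℂ) 1) := by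
    intro c
    refine continuousOn_laurent (c := fun k => g k a c) one_pos ?_ ?_
    · refine (hgs1 a c).congr fun k => ?_
      rw [one_zpow, mul_one]
    · exact fun z hz => hΓ z (hmem1 z hz).1 (hmem1 z hz).2 a c
  have hΓicont : ∀ c, ContinuousOn (fun ζ => Γi ζ c b) (sphere (0:ℂ) ρ) :=
    fun c => continuousOn_laurent (c := fun k => h k c b) hρ0 (hhs ρ hrρ.le (hρ.trans hR).le c b)
      (fun ζ hζ => hΓi ζ (hmemρ ζ hζ).1 (hmemρ ζ hζ).2 c b)
  -- abbreviations
  set δab : ℂ := if a = b then 1 else 0 with hδab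
  have hδabn : ‖δab‖ ≤ 1 := by
    rw [hδab]; split_ifs <;> simp
  set S : ℂ → ℂ → ℂ := fun z ζ => ∑ c, Γ z a c * Γi ζ c b with hS
  set W : ℕ → ℂ → ℂ := fun m z => ∑ c, Γ z a c * h (-(j:ℤ) - m - 1) c b with hW
  set fz : ℂ → ℤ → ℂ := fun z k => (∑ c, Γ z a c * h k c b) - (if k = 0 then δab else 0)
    with hfz
  -- Laurent expansion of ζ ↦ S z ζ - δab on the sphere of radius ρ
  have hFδ : ∀ z ∈ sphere (0:ℂ) 1, ∀ ζ ∈ sphere (0:ℂ) ρ,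
      HasSum (fun k : ℤ => fz z k * ζ ^ k) (S z ζ - δab) := by
    intro z hz ζ hζ
    have h1 : HasSum (fun k : ℤ => ∑ c, Γ z a c * (h k c b * ζ ^ k)) (S z ζ) := by
      rw [hS]
      exact hasSum_sum fun c _ =>
        (hΓi ζ (hmemρ ζ hζ).1 (hmemρ ζ hζ).2 c b).mul_left (Γ z a c)
    have h2 : HasSum (fun k : ℤ => (if k = 0 then δab else 0)) δab := hasSum_ite_eq 0 δab
    refine (h1.sub h2).congr_fun fun k => ?_
    rw [hfz]
    simp only [sub_mul, Finset.sum_mul]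
    congr 1
    · exact Finset.sum_congr rfl fun c _ => by ring
    · split_ifs with hk
      · subst hk; simp
      · simp
  -- summability of those Laurent coefficients (times ρ^k)
  have hfzsum : ∀ z ∈ sphere (0:ℂ) 1, Summable (fun k : ℤ => ‖fz z k‖ * ρ ^ k) := by
    intro z hz
    have hsum : Summable (fun k : ℤ =>
        (∑ c, Cg c * (‖h k c b‖ * ρ ^ k)) + (if k = 0 then (1:ℝ) else 0)) := by
      refine Summable.add ?_ (hasSum_ite_eq (0:ℤ) (1:ℝ)).summable
      exact summable_sum fun c _ => (hhs ρ hrρ.le (hρ.trans hR).le c b).mul_left (Cg c)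
    refine Summable.of_nonneg_of_le
      (fun k => mul_nonneg (norm_nonneg _) (zpow_nonneg hρ0.le _)) (fun k => ?_) hsum
    have hb1 : ‖fz z k‖ ≤ (∑ c, Cg c * ‖h k c b‖) + (if k = 0 then (1:ℝ) else 0) := by
      rw [hfz]
      refine (norm_sub_le _ _).trans (add_le_add ?_ ?_)
      · refine (norm_sum_le _ _).trans (Finset.sum_le_sum fun c _ => ?_)
        rw [norm_mul]
        exact mul_le_mul_of_nonneg_right (hCg z hz c) (norm_nonneg _)
      · split_ifs with hk
        · exact hδabn
        · simp
    calc ‖fz z k‖ * ρ ^ k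
        ≤ ((∑ c, Cg c * ‖h k c b‖) + (if k = 0 then (1:ℝ) else 0)) * ρ ^ k :=
          mul_le_mul_of_nonneg_right hb1 (zpow_nonneg hρ0.le _)
      _ = (∑ c, Cg c * (‖h k c b‖ * ρ ^ k)) + (if k = 0 then (1:ℝ) else 0) := by
          rw [add_mul, Finset.sum_mul]
          congr 1
          · exact Finset.sum_congr rfl fun c _ => by ring
          · split_ifs with hk
            · subst hk; simp
            · simp
  -- geometric expansion of the Cauchy kernel
  have hgeo : ∀ z ∈ sphere (0:ℂ) 1, ∀ ζ ∈ sphere (0:ℂ) ρ,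
      HasSum (fun m : ℕ => -(ζ ^ m * z ^ (-1 - (m:ℤ)))) ((ζ - z)⁻¹) := by
    intro z hz ζ hζ
    have hz1 : ‖z‖ = 1 := norm_eq_of_sphere hz
    have hz0 : z ≠ 0 := hne1 z hz
    have hζρ : ‖ζ‖ = ρ := norm_eq_of_sphere hζ
    have hlt : ‖ζ * z⁻¹‖ < 1 := by
      rw [norm_mul, norm_inv, hz1, hζρ]
      simpa using hρ
    have h1 : HasSum (fun m : ℕ => (ζ * z⁻¹) ^ m) (1 - ζ * z⁻¹)⁻¹ :=
      hasSum_geometric_of_norm_lt_one hlt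
    have h2 := h1.mul_left (-z⁻¹)
    have hval : -z⁻¹ * (1 - ζ * z⁻¹)⁻¹ = (ζ - z)⁻¹ := by
      have hζz : ζ - z ≠ 0 := by
        intro h0
        have : ζ = z := sub_eq_zero.mp h0
        rw [this] at hζρ
        rw [hz1] at hζρ
        exact absurd hζρ.symm (ne_of_lt hρ)
      have hfac : ζ - z = (-z) * (1 - ζ * z⁻¹) := by
        field_simp
        ring
      rw [hfac, mul_inv, inv_neg]
    rw [hval] at h2
    refine h2.congr_fun fun m => ?_
    have hzp : z ^ (-1 - (m:ℤ)) = (z ^ (m + 1 : ℕ))⁻¹ := by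
      rw [← zpow_natCast z (m + 1), ← zpow_neg]
      congr 1
      push_cast
      ring
    rw [hzp, mul_pow, inv_pow, pow_succ, mul_inv]
    ring
  -- the inner integral for z on the unit circle
  have hInner : ∀ z ∈ sphere (0:ℂ) 1,
      (∮ ζ in C(0, ρ), (ζ - z)⁻¹ * (S z ζ - δab) * ζ ^ (j:ℕ))
      = ∑' m : ℕ, (2 * (Real.pi:ℂ) * I) * (-(z ^ (-1 - (m:ℤ)) * W m z)) := by
    intro z hz
    have hz0 : z ≠ 0 := hne1 z hz
    have hz1 : ‖z‖ = 1 := norm_eq_of_sphere hz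
    set M : ℝ := ((∑ c, Cg c * Ch c) + 1) * ρ ^ (j:ℕ) with hM
    have hswap : (∮ ζ in C(0, ρ), (ζ - z)⁻¹ * (S z ζ - δab) * ζ ^ (j:ℕ))
        = ∑' m : ℕ, ∮ ζ in C(0, ρ),
            (-(ζ ^ m * z ^ (-1 - (m:ℤ)))) * (S z ζ - δab) * ζ ^ (j:ℕ) := by
      refine circleIntegral_tsum (ι := ℕ) hρ0
        (fun (m : ℕ) ζ => (-(ζ ^ m * z ^ (-1 - (m:ℤ)))) * (S z ζ - δab) * ζ ^ (j:ℕ)) _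
        (fun m => ρ ^ m * M) ?_ ?_ ?_ ?_
      · intro m
        refine ContinuousOn.mul (ContinuousOn.mul ?_ ?_) (continuous_pow _).continuousOn
        · exact (((continuous_pow m).continuousOn).mul continuousOn_const).neg
        · refine ContinuousOn.sub ?_ continuousOn_const
          exact continuousOn_finset_sum _ fun c _ => continuousOn_const.mul (hΓicont c)
      · exact (summable_geometric_of_lt_one hρ0.le hρ).mul_right M
      · intro m ζ hζ
        have hζρ : ‖ζ‖ = ρ := norm_eq_of_sphere hζ
        have hb1 : ‖S z ζ - δab‖ ≤ (∑ c, Cg c * Ch c) + 1 := by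
          refine (norm_sub_le _ _).trans (add_le_add ?_ hδabn)
          refine (norm_sum_le _ _).trans (Finset.sum_le_sum fun c _ => ?_)
          rw [norm_mul]
          exact mul_le_mul (hCg z hz c) (hCh ζ hζ c) (norm_nonneg _) (hCg0 c)
        calc ‖(-(ζ ^ m * z ^ (-1 - (m:ℤ)))) * (S z ζ - δab) * ζ ^ (j:ℕ)‖
            = (ρ ^ m * 1) * ‖S z ζ - δab‖ * ρ ^ (j:ℕ) := by
              rw [norm_mul, norm_mul, norm_neg, norm_mul, norm_pow, norm_zpow, norm_pow,
                hζρ, hz1, one_zpow]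
          _ ≤ (ρ ^ m * 1) * ((∑ c, Cg c * Ch c) + 1) * ρ ^ (j:ℕ) := by
              refine mul_le_mul_of_nonneg_right
                (mul_le_mul_of_nonneg_left hb1 (by positivity)) (by positivity)
          _ = ρ ^ m * M := by rw [hM]; ring
      · intro ζ hζ
        exact ((hgeo z hz ζ hζ).mul_right (S z ζ - δab)).mul_right (ζ ^ (j:ℕ))
    rw [hswap]
    refine tsum_congr fun m => ?_
    have hre : (fun ζ : ℂ => (-(ζ ^ m * z ^ (-1 - (m:ℤ)))) * (S z ζ - δab) * ζ ^ (j:ℕ))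
        = fun ζ : ℂ => (-(z ^ (-1 - (m:ℤ)))) * (ζ ^ (((m + j : ℕ)):ℤ) * (S z ζ - δab)) := by
      funext ζ
      rw [zpow_natCast, pow_add]
      ring
    rw [hre]
    have hsmul := circleIntegral.integral_smul (-(z ^ (-1 - (m:ℤ))))
      (fun ζ => ζ ^ (((m + j : ℕ)):ℤ) * (S z ζ - δab)) 0 ρ
    simp only [smul_eq_mul] at hsmul
    rw [hsmul]
    have hco := circleIntegral_coeff hρ0 (fz z) (fun ζ => S z ζ - δab) (((m + j : ℕ)):ℤ)
      (fun ζ hζ => hFδ z hz ζ hζ) (hfzsum z hz)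
    rw [hco]
    have hidx : (-(((m + j : ℕ)):ℤ) - 1) = -(j:ℤ) - m - 1 := by push_cast; ring
    have hfzk : fz z (-(((m + j : ℕ)):ℤ) - 1) = W m z := by
      rw [hidx]
      show (∑ c, Γ z a c * h (-(j:ℤ) - m - 1) c b)
          - (if (-(j:ℤ) - m - 1) = 0 then δab else 0) = W m z
      rw [if_neg (by omega), sub_zero, hW]
    rw [hfzk]
    ring
  -- the projected tail T and its properties
  set T : ℂ → ℂ := fun z => ∑' m : ℕ, -(z ^ (-1 - (m:ℤ)) * W m z) with hT
  set CK : ℝ := ∑ c, Cg c * Kh c with hCK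
  have hWbd : ∀ z ∈ sphere (0:ℂ) 1, ∀ m : ℕ, ‖W m z‖ ≤ CK * r ^ (m + j + 1 : ℕ) := by
    intro z hz m
    rw [hW, hCK]
    refine (norm_sum_le _ _).trans ?_
    rw [Finset.sum_mul]
    refine Finset.sum_le_sum fun c _ => ?_
    rw [norm_mul, mul_assoc]
    exact mul_le_mul (hCg z hz c) (hhneg c m) (norm_nonneg _) (hCg0 c)
  have hxbd : ∀ z ∈ sphere (0:ℂ) 1, ∀ m : ℕ,
      ‖-(z ^ (-1 - (m:ℤ)) * W m z)‖ ≤ CK * r ^ (j + 1 : ℕ) * r ^ m := by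
    intro z hz m
    rw [norm_neg, norm_mul, norm_zpow, norm_eq_of_sphere hz, one_zpow, one_mul]
    calc ‖W m z‖ ≤ CK * r ^ (m + j + 1 : ℕ) := hWbd z hz m
      _ = CK * r ^ (j + 1 : ℕ) * r ^ m := by
          rw [mul_assoc, ← pow_add]
          congr 2
          omega
  have hxsummable : Summable (fun m : ℕ => CK * r ^ (j + 1 : ℕ) * r ^ m) :=
    (summable_geometric_of_lt_one hr0.le hr1).mul_left _
  have hxsum : ∀ z ∈ sphere (0:ℂ) 1,
      HasSum (fun m : ℕ => -(z ^ (-1 - (m:ℤ)) * W m z)) (T z) := by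
    intro z hz
    have hsummable : Summable (fun m : ℕ => -(z ^ (-1 - (m:ℤ)) * W m z)) :=
      Summable.of_norm_bounded hxsummable (hxbd z hz)
    rw [hT]
    exact hsummable.hasSum
  have hTcont : ContinuousOn T (sphere (0:ℂ) 1) := by
    rw [hT]
    refine continuousOn_tsum (fun m => ?_) hxsummable (fun m z hz => hxbd z hz m)
    refine ContinuousOn.neg (ContinuousOn.mul ?_ ?_)
    · exact ContinuousOn.zpow₀ continuousOn_id _ fun z hz => Or.inl (hne1 z hz)
    · exact continuousOn_finset_sum _ fun c _ => (hΓcont c).mul continuousOn_const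
  -- split the outer integral
  set A : ℂ → ℂ := fun z => δab * z ^ ((j:ℤ) - i - 1) with hA
  set B : ℂ → ℂ := fun z => z ^ (-(i:ℤ) - 1) * T z with hB
  have hAcont : ContinuousOn A (sphere (0:ℂ) 1) := by
    rw [hA]
    exact continuousOn_const.mul
      (ContinuousOn.zpow₀ continuousOn_id _ fun z hz => Or.inl (hne1 z hz))
  have hBcont : ContinuousOn B (sphere (0:ℂ) 1) := by
    rw [hB]
    exact (ContinuousOn.zpow₀ continuousOn_id _ fun z hz => Or.inl (hne1 z hz)).mul hTcont
  have hsplit : (∮ z in C(0,1), z ^ (-(i:ℤ) - 1) *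
        ((if a = b then z ^ (j:ℕ) else 0) + (2 * (Real.pi:ℂ) * I)⁻¹ *
          ∮ ζ in C(0, ρ), (ζ - z)⁻¹ * (S z ζ - δab) * ζ ^ (j:ℕ)))
      = (∮ z in C(0,1), A z) + (∮ z in C(0,1), B z) := by
    rw [← circleIntegral_add_of_continuousOn one_pos hAcont hBcont]
    refine circleIntegral.integral_congr zero_le_one fun z hz => ?_
    have hz0 := hne1 z hz
    have h1 : (2 * (Real.pi:ℂ) * I)⁻¹ *
        (∮ ζ in C(0, ρ), (ζ - z)⁻¹ * (S z ζ - δab) * ζ ^ (j:ℕ)) = T z := by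
      rw [hInner z hz, ← tsum_mul_left, hT]
      exact tsum_congr fun m => by rw [inv_mul_cancel_left₀ h2πI]
    show z ^ (-(i:ℤ) - 1) * ((if a = b then z ^ (j:ℕ) else 0) + (2 * (Real.pi:ℂ) * I)⁻¹ *
        ∮ ζ in C(0, ρ), (ζ - z)⁻¹ * (S z ζ - δab) * ζ ^ (j:ℕ)) = A z + B z
    rw [h1, mul_add]
    congr 1
    · show z ^ (-(i:ℤ) - 1) * (if a = b then z ^ (j:ℕ) else 0) = δab * z ^ ((j:ℤ) - i - 1)
      rw [hδab]
      split_ifs with hab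
      · rw [one_mul, ← zpow_natCast z j, ← zpow_add₀ hz0]
        congr 1
        ring
      · rw [mul_zero, zero_mul]
  -- value of the A integral
  have hAval : (∮ z in C(0,1), A z)
      = (if i = j ∧ a = b then 2 * (Real.pi:ℂ) * I else 0) := by
    show (∮ z in C(0,1), δab * z ^ ((j:ℤ) - i - 1)) = _
    have hsmul := circleIntegral.integral_smul δab (fun z : ℂ => z ^ ((j:ℤ) - i - 1)) 0 1
    simp only [smul_eq_mul] at hsmul
    rw [hsmul, circleIntegral_zpow one_pos, hδab]
    rcases eq_or_ne i j with hij | hij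
    · rw [if_pos (by omega : (j:ℤ) - (i:ℤ) - 1 = -1)]
      rcases eq_or_ne a b with hab | hab
      · rw [if_pos hab, if_pos ⟨hij, hab⟩, one_mul]
      · rw [if_neg hab, if_neg (by tauto), zero_mul]
    · rw [if_neg (by omega : ¬((j:ℤ) - (i:ℤ) - 1 = -1)), mul_zero,
        if_neg (by tauto : ¬(i = j ∧ a = b))]
  -- value of the B integral
  have hBval : (∮ z in C(0,1), B z)
      = ∑' m : ℕ, -((2 * (Real.pi:ℂ) * I) *
          ∑ c, g ((i:ℤ) + m + 1) a c * h (-(j:ℤ) - m - 1) c b) := by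
    have hswap2 : (∮ z in C(0,1), B z) = ∑' m : ℕ,
        ∮ z in C(0,1), z ^ (-(i:ℤ) - 1) * -(z ^ (-1 - (m:ℤ)) * W m z) := by
      refine circleIntegral_tsum (ι := ℕ) one_pos
        (fun (m : ℕ) z => z ^ (-(i:ℤ) - 1) * -(z ^ (-1 - (m:ℤ)) * W m z)) B
        (fun m => CK * r ^ (j + 1 : ℕ) * r ^ m) ?_ hxsummable ?_ ?_
      · intro m
        refine ContinuousOn.mul
          (ContinuousOn.zpow₀ continuousOn_id _ fun z hz => Or.inl (hne1 z hz)) ?_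
        refine ContinuousOn.neg (ContinuousOn.mul
          (ContinuousOn.zpow₀ continuousOn_id _ fun z hz => Or.inl (hne1 z hz)) ?_)
        exact continuousOn_finset_sum _ fun c _ => (hΓcont c).mul continuousOn_const
      · intro m z hz
        rw [norm_mul, norm_zpow, norm_eq_of_sphere hz, one_zpow, one_mul]
        exact hxbd z hz m
      · intro z hz
        exact (hxsum z hz).mul_left _
    rw [hswap2]
    refine tsum_congr fun m => ?_
    have hcongr : (∮ z in C(0,1), z ^ (-(i:ℤ) - 1) * -(z ^ (-1 - (m:ℤ)) * W m z))
        = ∮ z in C(0,1), (-1:ℂ) * (z ^ (-(i:ℤ) - m - 2) * W m z) := by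
      refine circleIntegral.integral_congr zero_le_one fun z hz => ?_
      have hz0 := hne1 z hz
      show z ^ (-(i:ℤ) - 1) * -(z ^ (-1 - (m:ℤ)) * W m z)
          = (-1:ℂ) * (z ^ (-(i:ℤ) - m - 2) * W m z)
      rw [show (-(i:ℤ) - m - 2) = (-(i:ℤ) - 1) + (-1 - (m:ℤ)) by ring, zpow_add₀ hz0]
      ring
    rw [hcongr]
    have hsmul := circleIntegral.integral_smul (-1:ℂ)
      (fun z : ℂ => z ^ (-(i:ℤ) - m - 2) * W m z) 0 1
    simp only [smul_eq_mul] at hsmul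
    rw [hsmul]
    have hFW : ∀ z ∈ sphere (0:ℂ) 1, HasSum
        (fun k : ℤ => (∑ c, g k a c * h (-(j:ℤ) - m - 1) c b) * z ^ k) (W m z) := by
      intro z hz
      have h1 : HasSum (fun k : ℤ => ∑ c, g k a c * z ^ k * h (-(j:ℤ) - m - 1) c b)
          (W m z) := by
        rw [hW]
        exact hasSum_sum fun c _ => (hΓ z (hmem1 z hz).1 (hmem1 z hz).2 a c).mul_right _
      refine h1.congr_fun fun k => ?_
      rw [Finset.sum_mul]
      exact Finset.sum_congr rfl fun c _ => by ring
    have hsW : Summable (fun k : ℤ =>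
        ‖∑ c, g k a c * h (-(j:ℤ) - m - 1) c b‖ * (1:ℝ) ^ k) := by
      have hs2 : Summable (fun k : ℤ => ∑ c, ‖g k a c‖ * ‖h (-(j:ℤ) - m - 1) c b‖) :=
        summable_sum fun c _ => (hgs1 a c).mul_right _
      refine Summable.of_nonneg_of_le
        (fun k => mul_nonneg (norm_nonneg _) (zpow_nonneg zero_le_one _))
        (fun k => ?_) hs2
      rw [one_zpow, mul_one]
      exact (norm_sum_le _ _).trans (Finset.sum_le_sum fun c _ => by rw [norm_mul])
    rw [circleIntegral_coeff one_pos _ (W m) _ hFW hsW,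
      show (-(-(i:ℤ) - m - 2) - 1) = (i:ℤ) + m + 1 by ring]
    ring
  -- final assembly
  show (2 * (Real.pi:ℂ) * I)⁻¹ *
      (∮ z in C(0,1), z ^ (-(i:ℤ) - 1) *
        ((if a = b then z ^ (j:ℕ) else 0) + (2 * (Real.pi:ℂ) * I)⁻¹ *
          ∮ ζ in C(0, ρ), (ζ - z)⁻¹ * (S z ζ - δab) * ζ ^ (j:ℕ)))
      = (if i = j ∧ a = b then 1 else 0)
          - ∑' k : ℕ, ∑ c, g ((i:ℤ) + k + 1) a c * h (-(j:ℤ) - k - 1) c b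
  rw [hsplit, hAval, hBval, mul_add, sub_eq_add_neg]
  congr 1
  · split_ifs with hc
    · exact inv_mul_cancel₀ h2πI
    · exact mul_zero _
  · rw [← tsum_mul_left, ← tsum_neg]
    refine tsum_congr fun m => ?_
    rw [mul_neg, inv_mul_cancel_left₀ h2πI]
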